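/- Let C be a cycle with vertices u_1,…,u_m and arc gains g_1,…,g_m (arc i goes from u_i to u_{i+1 mod m}), with total gain g(C) = Σ g_i > 0. Suppose the closed walk around C starting at u_1 (traversing each arc exactly once and returning to u_1) is strongly traversable. Then there exist vertices x and y on C such that either x = y and the closed walk around C starting at x is ascending, or x ≠ y and the simple path from x to y along C is ascending while the simple path from y to x along C is descending (with respect to the zero schedule). -/
import Mathlib


open Finset

namespace EV

noncomputable section

/-- Charge after traversing `i` arcs of a path with arc gains `g`, battery capacity `B`,
initial charge `b`. -/
def charge (B b : ℝ) (g : ℕ → ℝ) : ℕ → ℝ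
  | 0 => b
  | i + 1 => min (charge B b g i + g i) B

/-- The traversal of the path with `n` arcs is feasible from initial charge `b`. -/
def Feasible (B b : ℝ) (g : ℕ → ℝ) (n : ℕ) : Prop :=
  ∀ i < n, 0 ≤ charge B b g i + g i

open Classical in
/-- Maximum final charge `α_b(P)` for a path `P` with `n` arc gains `g`,
as an extended real (`⊥ = -∞` if the traversal is infeasible). -/
def alpha (B b : ℝ) (g : ℕ → ℝ) (n : ℕ) : EReal :=
  if Feasible B b g n then ((charge B b g n : ℝ) : EReal) else ⊥

/-- Gain of the `i`-th vertex (0-indexed): the sum of the first `i` arc gains. -/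
def vGain (g : ℕ → ℝ) (i : ℕ) : ℝ := ∑ t ∈ Finset.range i, g t

/-- `P` is traversable: `α_B(P) ≥ 0`, i.e. feasible from a full battery. -/
def Traversable (B : ℝ) (g : ℕ → ℝ) (n : ℕ) : Prop := Feasible B B g n

/-- `C` is a charge drop schedule for a path with `n` arcs (vertices `0,…,n`):
no drop at the first vertex, all drops nonnegative. -/
def Schedule (C : ℕ → ℝ) (n : ℕ) : Prop := C 0 = 0 ∧ ∀ i ≤ n, 0 ≤ C i

/-- Gain of vertex `i` with respect to the charge drop schedule `C`. -/
def cGain (g C : ℕ → ℝ) (i : ℕ) : ℝ := vGain g i - ∑ t ∈ Finset.range (i + 1), C t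

/-- `P` (with `n` arcs) is ascending with respect to the schedule `C`. -/
def AscendingC (B : ℝ) (g C : ℕ → ℝ) (n : ℕ) : Prop :=
  Traversable B g n ∧ ∀ i ≤ n, 0 ≤ cGain g C i ∧ cGain g C i ≤ cGain g C n

/-- `P` (with `n` arcs) is descending with respect to the schedule `C`. -/
def DescendingC (B : ℝ) (g C : ℕ → ℝ) (n : ℕ) : Prop :=
  Traversable B g n ∧ ∀ i ≤ n, cGain g C n ≤ cGain g C i ∧ cGain g C i ≤ 0

/-- `P` is monotone with respect to the schedule `C`. -/
def MonotoneC (B : ℝ) (g C : ℕ → ℝ) (n : ℕ) : Prop :=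
  AscendingC B g C n ∨ DescendingC B g C n

/-- Ascending with respect to the zero schedule. -/
def Ascending (B : ℝ) (g : ℕ → ℝ) (n : ℕ) : Prop := AscendingC B g (fun _ => 0) n

/-- Descending with respect to the zero schedule. -/
def Descending (B : ℝ) (g : ℕ → ℝ) (n : ℕ) : Prop := DescendingC B g (fun _ => 0) n

/-- Monotone with respect to the zero schedule. -/
def MonotonePath (B : ℝ) (g : ℕ → ℝ) (n : ℕ) : Prop := Ascending B g n ∨ Descending B g n

/-- The contiguous subpath whose arcs start at arc index `a`. -/
def SubPath (g : ℕ → ℝ) (a : ℕ) : ℕ → ℝ := fun t => g (a + t)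

/-- Restriction of a charge drop schedule to the subpath starting at vertex `a`:
no drop at the subpath's first vertex. -/
def restrict (C : ℕ → ℝ) (a : ℕ) : ℕ → ℝ := fun t => if t = 0 then 0 else C (a + t)

/-- First-arc-bounded with respect to a schedule `C` (no drop at the second vertex,
and all vertex gains lie between the gains of the first two vertices). -/
def FirstArcBoundedC (g C : ℕ → ℝ) (n : ℕ) : Prop :=
  C 1 = 0 ∧
    ((0 ≤ g 0 ∧ ∀ i ≤ n, 0 ≤ cGain g C i ∧ cGain g C i ≤ g 0) ∨
     (g 0 ≤ 0 ∧ ∀ i ≤ n, g 0 ≤ cGain g C i ∧ cGain g C i ≤ 0))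

/-- Last-arc-bounded with respect to a schedule `C` (no drops at the last two vertices,
and all vertex gains lie between the gains of the last two vertices). -/
def LastArcBoundedC (g C : ℕ → ℝ) (n : ℕ) : Prop :=
  C (n - 1) = 0 ∧ C n = 0 ∧
    ((0 ≤ g (n - 1) ∧ ∀ i ≤ n, cGain g C (n - 1) ≤ cGain g C i ∧ cGain g C i ≤ cGain g C n) ∨
     (g (n - 1) < 0 ∧ ∀ i ≤ n, cGain g C n ≤ cGain g C i ∧ cGain g C i ≤ cGain g C (n - 1)))

/-- First-arc-bounded (zero schedule). -/
def FirstArcBounded (g : ℕ → ℝ) (n : ℕ) : Prop := FirstArcBoundedC g (fun _ => 0) n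

/-- Last-arc-bounded (zero schedule). -/
def LastArcBounded (g : ℕ → ℝ) (n : ℕ) : Prop := LastArcBoundedC g (fun _ => 0) n

/-- Arc-bounded: first- or last-arc-bounded. -/
def ArcBounded (g : ℕ → ℝ) (n : ℕ) : Prop := FirstArcBounded g n ∨ LastArcBounded g n

/-- A funnel: arc-bounded and containing no monotone subpath of 2 or 3 consecutive arcs. -/
def Funnel (B : ℝ) (g : ℕ → ℝ) (n : ℕ) : Prop :=
  ArcBounded g n ∧ ∀ a m, (m = 2 ∨ m = 3) → a + m ≤ n → ¬ MonotonePath B (SubPath g a) m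

/-- `j = s̄(i)`: the maximal index `j ≥ i` (among arcs of a path with `n` arcs) such that
the subpath of arcs `i,…,j` is first-arc-bounded. -/
def IsSbar (g : ℕ → ℝ) (n i j : ℕ) : Prop :=
  i ≤ j ∧ j < n ∧ FirstArcBounded (SubPath g i) (j - i + 1) ∧
    ∀ j', i ≤ j' → j' < n → FirstArcBounded (SubPath g i) (j' - i + 1) → j' ≤ j

/-- `j = s̲(i)`: the minimal index `j ≤ i` such that the subpath of arcs `j,…,i`
is last-arc-bounded. -/
def IsSlow (g : ℕ → ℝ) (n i j : ℕ) : Prop :=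
  j ≤ i ∧ i < n ∧ LastArcBounded (SubPath g j) (i - j + 1) ∧
    ∀ j', j' ≤ i → LastArcBounded (SubPath g j') (i - j' + 1) → j ≤ j'

/-- Arc gains of the walk around a cycle with `m` arc gains `g`, starting at vertex `a`. -/
def cyc (g : ℕ → ℝ) (m a : ℕ) : ℕ → ℝ := fun t => g ((a + t) % m)

/-- A walk of length `ℓ` from `x` to `y` in the directed graph with arc relation `A`. -/
def IsWalk {V : Type*} (A : V → V → Prop) (w : ℕ → V) (ℓ : ℕ) (x y : V) : Prop :=
  w 0 = x ∧ w ℓ = y ∧ ∀ t < ℓ, A (w t) (w (t + 1))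

/-- The sequence of arc gains induced by a walk `w` in a graph with gain function `g`. -/
def walkGains {V : Type*} (g : V → V → ℝ) (w : ℕ → V) : ℕ → ℝ :=
  fun t => g (w t) (w (t + 1))

/-! ### Auxiliary lemmas -/

lemma vGain_succ (g : ℕ → ℝ) (i : ℕ) : vGain g (i+1) = vGain g i + g i :=
  Finset.sum_range_succ g i

lemma vGain_zero (g : ℕ → ℝ) : vGain g 0 = 0 := Finset.sum_range_zero g

lemma cGain_zero (g : ℕ → ℝ) (i : ℕ) : cGain g (fun _ => 0) i = vGain g i := by
  simp [cGain]

lemma charge_zero (B b : ℝ) (g : ℕ → ℝ) : charge B b g 0 = b := rfl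

lemma charge_succ (B b : ℝ) (g : ℕ → ℝ) (i : ℕ) :
    charge B b g (i+1) = min (charge B b g i + g i) B := rfl

lemma charge_le_B (B b : ℝ) (hb : b ≤ B) (g : ℕ → ℝ) : ∀ i, charge B b g i ≤ B
  | 0 => hb
  | (i+1) => min_le_right _ _

lemma charge_le_from (B b : ℝ) (g : ℕ → ℝ) {j i : ℕ} (h : j ≤ i) :
    charge B b g i ≤ charge B b g j + (vGain g i - vGain g j) := by
  induction i, h using Nat.le_induction with
  | base => simp
  | succ i hji ih =>
      rw [charge_succ, vGain_succ]
      calc min (charge B b g i + g i) B ≤ charge B b g i + g i := min_le_left _ _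
        _ ≤ charge B b g j + (vGain g i - vGain g j) + g i := by linarith
        _ = charge B b g j + (vGain g i + g i - vGain g j) := by ring

lemma feasible_of_drops (B : ℝ) (hB : 0 ≤ B) (g : ℕ → ℝ) (n : ℕ)
    (h : ∀ j t, j < t → t ≤ n → vGain g j - vGain g t ≤ B) : Feasible B B g n := by
  have key : ∀ i, ∃ j, j ≤ i ∧ B + vGain g i - vGain g j ≤ charge B B g i := by
    intro i
    induction i with
    | zero => exact ⟨0, le_refl _, by simp [charge_zero, vGain_zero]⟩
    | succ i ih =>
        obtain ⟨j, hj, hc⟩ := ih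
        rcases le_total (charge B B g i + g i) B with hcase | hcase
        · refine ⟨j, by omega, ?_⟩
          rw [charge_succ, min_eq_left hcase, vGain_succ]
          linarith
        · refine ⟨i+1, le_refl _, ?_⟩
          rw [charge_succ, min_eq_right hcase]
          linarith
  intro i hi
  obtain ⟨j, hj, hc⟩ := key i
  have h2 := h j (i+1) (by omega) (by omega)
  have h3 := vGain_succ g i
  linarith

/-- Let `C` be a cycle with `m` arcs of gains `g 0, …, g (m-1)` and positive
total gain, such that the closed walk around `C` starting at vertex `0` is strongly
traversable. Then there are vertices `x`, `y` on `C` such that either `x = y` and the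
closed walk around `C` starting at `x` is ascending, or `x ≠ y` and the simple path from
`x` to `y` along `C` is ascending while the simple path from `y` to `x` along `C` is
descending. -/
theorem cycle_entry_exit (B : ℝ) (hB : 0 < B) (m : ℕ) (hm : 1 ≤ m) (g : ℕ → ℝ)
    (hpos : 0 < ∑ t ∈ Finset.range m, g t)
    (hst : (0 : EReal) ≤ alpha B 0 g m) :
    ∃ x < m, ∃ y < m,
      (x = y ∧ Ascending B (cyc g m x) m) ∨
      (x ≠ y ∧ Ascending B (cyc g m x) ((y + m - x) % m) ∧
        Descending B (cyc g m y) ((x + m - y) % m)) := by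
  classical
  -- Extract feasibility from `hst`.
  have hfeas : Feasible B 0 g m := by
    by_contra h
    rw [alpha, if_neg h] at hst
    exact absurd hst (by simp)
  set S : ℝ := ∑ t ∈ Finset.range m, g t with hS
  have hvS : vGain g m = S := rfl
  -- basic consequences of strong traversability
  have hnn : ∀ t ≤ m, 0 ≤ vGain g t := by
    intro t ht
    cases t with
    | zero => simp [vGain_zero]
    | succ i =>
        have h1 := hfeas i (by omega)
        have h2 : charge B 0 g i ≤ charge B 0 g 0 + (vGain g i - vGain g 0) :=
          charge_le_from B 0 g (Nat.zero_le i)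
        rw [charge_zero, vGain_zero] at h2
        rw [vGain_succ]
        linarith
  have hdrop : ∀ j t, j < t → t ≤ m → vGain g j - vGain g t ≤ B := by
    intro j t hjt htm
    cases j with
    | zero =>
        rw [vGain_zero]
        have := hnn t htm
        linarith
    | succ k =>
        obtain ⟨i, rfl⟩ : ∃ i, t = i + 1 := ⟨t - 1, by omega⟩
        have h1 := hfeas i (by omega)
        have h2 : charge B 0 g i ≤ charge B 0 g (k+1) + (vGain g i - vGain g (k+1)) :=
          charge_le_from B 0 g (by omega)
        have h3 : charge B 0 g (k+1) ≤ B := min_le_right _ _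
        have h4 := vGain_succ g i
        linarith
  -- the lifted prefix-sum function around the cycle
  set F : ℕ → ℝ := fun t => ∑ u ∈ Finset.range t, g (u % m) with hF
  have hFsucc : ∀ t, F (t+1) = F t + g (t % m) := fun t => Finset.sum_range_succ _ t
  have hFeq : ∀ t ≤ m, F t = vGain g t := by
    intro t ht
    refine Finset.sum_congr rfl fun u hu => ?_
    rw [Nat.mod_eq_of_lt (by simp at hu; omega)]
  have hFadd : ∀ t, F (t + m) = F t + S := by
    intro t
    induction t with
    | zero =>
        simp only [Nat.zero_add]
        rw [hFeq m le_rfl, hvS, hF]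
        simp
    | succ t ih =>
        have e1 : t + 1 + m = (t + m) + 1 := by omega
        rw [e1, hFsucc, ih, hFsucc]
        have : (t + m) % m = t % m := Nat.add_mod_right t m
        rw [this]; ring
  have hFmul : ∀ t k, F (t + k * m) = F t + k * S := by
    intro t k
    induction k with
    | zero => simp
    | succ k ih =>
        have e1 : t + (k+1) * m = (t + k * m) + m := by ring
        rw [e1, hFadd, ih]
        push_cast; ring
  have hFmod : ∀ t, F t = F (t % m) + ((t / m : ℕ) : ℝ) * S := by
    intro t
    conv_lhs => rw [show t = t % m + (t / m) * m from (Nat.mod_add_div' t m).symm]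
    exact hFmul _ _
  -- vertex gains of cyclic walks in terms of F
  have hvc : ∀ a t, vGain (cyc g m a) t = F (a + t) - F a := by
    intro a t
    induction t with
    | zero => simp [vGain_zero]
    | succ t ih =>
        rw [vGain_succ, ih, show a + (t+1) = (a+t) + 1 by omega, hFsucc]
        simp [cyc]; ring
  -- drops of F within a window of length ≤ m are bounded by B
  have hdropF : ∀ s t, s < t → t ≤ s + m → F s - F t ≤ B := by
    intro s t hst' htm
    have hm0 : 0 < m := by omega
    have hsm := Nat.mod_lt s hm0
    have htmm := Nat.mod_lt t hm0
    have es := Nat.mod_add_div s m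
    have et := Nat.mod_add_div t m
    have hq : t / m = s / m ∨ t / m = s / m + 1 := by
      have h1 : s / m ≤ t / m := Nat.div_le_div_right (le_of_lt hst')
      have h2 : t / m ≤ (s + m) / m := Nat.div_le_div_right htm
      rw [Nat.add_div_right _ hm0] at h2
      omega
    have e1 := hFmod s
    have e2 := hFmod t
    rw [hFeq _ (le_of_lt hsm)] at e1
    rw [hFeq _ (le_of_lt htmm)] at e2
    rcases hq with hq | hq
    · have hmm : m * (t / m) = m * (s / m) := by rw [hq]
      have hlt : s % m < t % m := by omega
      have hd1 := hdrop (s % m) (t % m) hlt (le_of_lt htmm)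
      rw [e1, e2, hq]
      linarith
    · have h1 := hdrop (s % m) m hsm le_rfl
      rw [hvS] at h1
      have h2 := hnn (t % m) (le_of_lt htmm)
      rw [e1, e2, hq]
      push_cast
      linarith
  -- every cyclic subwalk of length ≤ m is traversable from a full battery
  have htrav : ∀ a n, n ≤ m → Feasible B B (cyc g m a) n := by
    intro a n hn
    refine feasible_of_drops B (le_of_lt hB) _ n fun j t hjt htn => ?_
    rw [hvc, hvc]
    have : F (a + j) - F (a + t) ≤ B :=
      hdropF (a + j) (a + t) (by omega) (by omega)
    linarith
  -- choose the pair maximizing the span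
  obtain ⟨p, hpmem, hpmax⟩ := Finset.exists_max_image
    (Finset.range m ×ˢ Finset.range m) (fun p => F (p.1 + p.2 + 1) - F p.1)
    ⟨(0,0), by simp; omega⟩
  obtain ⟨x, e⟩ := p
  simp only [Finset.mem_product, Finset.mem_range] at hpmem
  obtain ⟨hx, he⟩ := hpmem
  set d : ℕ := e + 1 with hd
  have hd1 : 1 ≤ d := by omega
  have hdm : d ≤ m := by omega
  set y' : ℕ := x + d with hy'
  set D : ℝ := F y' - F x with hD
  have hmaster : ∀ t k, k < m → F (t + k + 1) - F t ≤ D := by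
    intro t k hk
    have e1 : F t = F (t % m) + ((t / m : ℕ) : ℝ) * S := hFmod t
    have e2 : F (t + k + 1) = F (t % m + k + 1) + ((t / m : ℕ) : ℝ) * S := by
      rw [show t + k + 1 = (t % m + k + 1) + (t / m) * m from by
        conv_lhs => rw [show t = t % m + t / m * m from (Nat.mod_add_div' t m).symm]
        ring]
      exact hFmul _ _
    have h3 := hpmax (t % m, k) (by
      simp only [Finset.mem_product, Finset.mem_range]
      exact ⟨Nat.mod_lt t (by omega), hk⟩)
    simp only at h3
    rw [e1, e2]
    calc F (t % m + k + 1) + ((t / m : ℕ) : ℝ) * S - (F (t % m) + ((t / m : ℕ) : ℝ) * S)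
        = F (t % m + k + 1) - F (t % m) := by ring
      _ ≤ D := h3
  have hDS : S ≤ D := by
    have h1 := hmaster x (m - 1) (by omega)
    rw [show x + (m - 1) + 1 = x + m by omega, hFadd] at h1
    linarith
  have hSpos : 0 < S := hpos
  have hC' : ∀ t, y' ≤ t → t ≤ x + m → F x + S ≤ F t := by
    intro t h1 h2
    rcases eq_or_lt_of_le h1 with rfl | h1
    · linarith
    · have h3 := hmaster t (y' + m - t - 1) (by omega)
      rw [show t + (y' + m - t - 1) + 1 = y' + m by omega, hFadd] at h3
      linarith
  have hB' : ∀ t, x ≤ t → t ≤ x + m → F t ≤ F y' := by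
    intro t h1 h2
    rcases eq_or_lt_of_le h1 with rfl | h1
    · linarith
    · have h3 := hmaster x (t - x - 1) (by omega)
      rw [show x + (t - x - 1) + 1 = t by omega] at h3
      linarith
  have hA : ∀ t, x ≤ t → t ≤ x + m → F x ≤ F t := by
    intro t h1 h2
    rcases le_or_gt y' t with h3 | h3
    · have := hC' t h3 h2; linarith
    · rcases eq_or_lt_of_le h1 with rfl | h1
      · linarith
      · have h4 := hmaster t (y' - t - 1) (by omega)
        rw [show t + (y' - t - 1) + 1 = y' by omega] at h4
        linarith
  -- assemble the answer
  rcases eq_or_lt_of_le hdm with hdm' | hdm'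
  · -- d = m : the whole cycle from x is ascending
    refine ⟨x, hx, x, hx, Or.inl ⟨rfl, ?_, ?_⟩⟩
    · exact htrav x m le_rfl
    · intro i hi
      rw [cGain_zero, cGain_zero, hvc, hvc]
      constructor
      · have := hA (x + i) (by omega) (by omega); linarith
      · have := hB' (x + i) (by omega) (by omega)
        rw [hy', hdm'] at this
        linarith
  · -- d < m
    set y : ℕ := (x + d) % m with hy
    have hym : y < m := Nat.mod_lt _ (by omega)
    have hycase : y = x + d ∨ (m ≤ x + d ∧ y = x + d - m) := by
      rcases Nat.lt_or_ge (x + d) m with h | h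
      · left; rw [hy, Nat.mod_eq_of_lt h]
      · right
        exact ⟨h, by rw [hy, Nat.mod_eq_sub_mod h, Nat.mod_eq_of_lt (by omega)]⟩
    have hxy : x ≠ y := by rcases hycase with h | ⟨h, h2⟩ <;> omega
    have len1 : (y + m - x) % m = d := by
      have h1 : y + m - x = d ∨ y + m - x = d + m := by
        rcases hycase with h | ⟨h, h2⟩ <;> omega
      rcases h1 with h1 | h1
      · rw [h1, Nat.mod_eq_of_lt hdm']
      · rw [h1, Nat.add_mod_right, Nat.mod_eq_of_lt hdm']
    have len2 : (x + m - y) % m = m - d := by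
      have h1 : x + m - y = m - d ∨ x + m - y = (m - d) + m := by
        rcases hycase with h | ⟨h, h2⟩ <;> omega
      rcases h1 with h1 | h1
      · rw [h1, Nat.mod_eq_of_lt (by omega)]
      · rw [h1, Nat.add_mod_right, Nat.mod_eq_of_lt (by omega)]
    have hcyceq : cyc g m y = cyc g m y' := by
      funext t
      simp only [cyc, hy, hy']
      rw [Nat.mod_add_mod]
    refine ⟨x, hx, y, hym, Or.inr ⟨hxy, ?_, ?_⟩⟩
    · -- ascending x → y
      rw [len1]
      refine ⟨htrav x d hdm, fun i hi => ?_⟩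
      rw [cGain_zero, cGain_zero, hvc, hvc]
      constructor
      · have := hA (x + i) (by omega) (by omega); linarith
      · have := hB' (x + i) (by omega) (by omega)
        rw [hy'] at this
        linarith
    · -- descending y → x
      rw [len2, hcyceq]
      refine ⟨htrav y' (m - d) (by omega), fun i hi => ?_⟩
      rw [cGain_zero, cGain_zero, hvc, hvc]
      have hax : F (x + m) = F x + S := hFadd x
      have e1 : y' + (m - d) = x + m := by omega
      constructor
      · rw [e1, hax]
        have := hC' (y' + i) (by omega) (by omega)
        linarith
      · have := hB' (y' + i) (by omega) (by omega)
        linarith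

end

end EV
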